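/- For all real numbers κ with 0 < κ ≤ e and all real numbers x ≥ e^(1/κ), setting m = ⌊κ·log(x)⌋, one has m!/(log(x))^(m+1) < C_κ / (x^(κ(1−log κ)) · √(log x)), where C_κ = √(2π/κ)·e^(13/12). -/

import Mathlib

open Real

/-- numeric fact: e^(11/12) < √(2π) -/
lemma aux_exp_lt_sqrt_two_pi : Real.exp (11/12) < Real.sqrt (2 * Real.pi) := by
  have hπ : (3.141592 : ℝ) < Real.pi := Real.pi_gt_d6
  have h2π : (6.283184 : ℝ) < 2 * Real.pi := by linarith
  have he : Real.exp 1 < 2.7182818286 := Real.exp_one_lt_d9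
  have h11 : Real.exp 11 < (6.283184:ℝ)^6 := by
    have h1 : Real.exp 11 = (Real.exp 1)^11 := by
      rw [← Real.exp_nat_mul]; norm_num
    have h2 : (Real.exp 1)^11 < (2.7182818286:ℝ)^11 :=
      pow_lt_pow_left₀ he (Real.exp_pos 1).le (by norm_num)
    have h3 : (2.7182818286:ℝ)^11 < (6.283184:ℝ)^6 := by norm_num
    linarith [h1 ▸ lt_trans h2 h3]
  have hkey : Real.exp (11/12) ^ 12 < Real.sqrt (2*Real.pi) ^ 12 := by
    have hl : Real.exp (11/12) ^ 12 = Real.exp 11 := by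
      rw [← Real.exp_nat_mul]; norm_num
    have hr : Real.sqrt (2*Real.pi) ^ 12 = (2*Real.pi)^6 := by
      rw [show (12:ℕ) = 2*6 by norm_num, pow_mul, Real.sq_sqrt (by positivity)]
    rw [hl, hr]
    refine lt_trans h11 (pow_lt_pow_left₀ h2π (by norm_num) (by norm_num))
  exact lt_of_pow_lt_pow_left₀ 12 (Real.sqrt_nonneg _) hkey

/-- Stirling-type bound: `n! ≤ e √n (n/e)^n` for `n ≥ 1`. -/
lemma aux_factorial_le (m : ℕ) (hm : 1 ≤ m) :
    (m.factorial : ℝ) ≤ Real.exp 1 * Real.sqrt m * ((m : ℝ) / Real.exp 1) ^ m := by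
  obtain ⟨k, rfl⟩ := Nat.exists_eq_add_of_le hm
  have hpos : (0:ℝ) < Real.sqrt (2 * (1+k) : ℝ) * (((1+k : ℕ) : ℝ) / Real.exp 1) ^ (1+k) := by
    positivity
  have hmono : Stirling.stirlingSeq (k+1) ≤ Stirling.stirlingSeq 1 := by
    have h := Stirling.log_stirlingSeq'_antitone (Nat.zero_le k)
    simp only [Function.comp] at h
    have h1 := Stirling.stirlingSeq'_pos k
    have h2 := Stirling.stirlingSeq'_pos 0
    rw [Nat.succ_eq_add_one, Nat.succ_eq_add_one] at h
    exact (Real.log_le_log_iff h1 h2).mp (by simpa using h)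
  have hs1 : Stirling.stirlingSeq 1 = Real.exp 1 / Real.sqrt 2 := Stirling.stirlingSeq_one
  have hdef : Stirling.stirlingSeq (1+k) =
      ((1+k : ℕ).factorial : ℝ) / (Real.sqrt (2 * (1+k) : ℝ) * (((1+k:ℕ):ℝ) / Real.exp 1) ^ (1+k)) := by
    simp [Stirling.stirlingSeq]
  have hmain := hmono
  rw [add_comm k 1] at hmain
  rw [hdef, hs1, div_le_div_iff₀ hpos (by positivity)] at hmain
  have h2 : Real.sqrt 2 ≠ 0 := by positivity
  calc ((1+k : ℕ).factorial : ℝ)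
      = ((1+k : ℕ).factorial : ℝ) * Real.sqrt 2 / Real.sqrt 2 := by
        rw [mul_div_cancel_right₀ _ h2]
    _ ≤ Real.exp 1 * (Real.sqrt (2 * (1+k):ℝ) * (((1+k:ℕ):ℝ)/Real.exp 1)^(1+k)) / Real.sqrt 2 := by
        gcongr
    _ = Real.exp 1 * Real.sqrt ((1+k:ℕ):ℝ) * (((1+k:ℕ):ℝ)/Real.exp 1)^(1+k) := by
        rw [Real.sqrt_mul (by norm_num : (0:ℝ) ≤ 2)]
        field_simp
        push_cast
        ring

theorem factorial_div_log_pow_lt (κ x : ℝ) (hκ0 : 0 < κ) (hκe : κ ≤ Real.exp 1)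
    (hx : Real.exp (1 / κ) ≤ x) :
    (Nat.factorial ⌊κ * Real.log x⌋₊ : ℝ) / Real.log x ^ (⌊κ * Real.log x⌋₊ + 1)
      < Real.sqrt (2 * Real.pi / κ) * Real.exp (13 / 12)
        / (x ^ (κ * (1 - Real.log κ)) * Real.sqrt (Real.log x)) := by
  have hx0 : (0:ℝ) < x := lt_of_lt_of_le (Real.exp_pos _) hx
  set L := Real.log x with hLdef
  have hL : 1/κ ≤ L := (Real.le_log_iff_exp_le hx0).mpr hx
  have hL0 : (0:ℝ) < L := lt_of_lt_of_le (by positivity) hL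
  set t := κ * L with htdef
  have ht1 : 1 ≤ t := by
    rw [htdef]
    calc (1:ℝ) = κ * (1/κ) := by field_simp
      _ ≤ κ * L := by gcongr
  have ht0 : (0:ℝ) < t := lt_of_lt_of_le one_pos ht1
  set m := ⌊t⌋₊ with hmdef
  have hm1 : 1 ≤ m := Nat.le_floor (by exact_mod_cast ht1)
  have hmle : (m:ℝ) ≤ t := Nat.floor_le ht0.le
  have hmlt : t < m + 1 := Nat.lt_floor_add_one t
  have hm0 : (0:ℝ) < m := by exact_mod_cast hm1
  set s := t - m with hsdef
  have hs0 : 0 ≤ s := by rw [hsdef]; linarith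
  have hs1 : s ≤ 1 := by rw [hsdef]; linarith
  have hlogκ : Real.log κ ≤ 1 := by
    calc Real.log κ ≤ Real.log (Real.exp 1) := Real.log_le_log hκ0 hκe
      _ = 1 := Real.log_exp 1
  set C := Real.sqrt (2 * Real.pi / κ) * Real.exp (13/12) with hCdef
  have hC0 : 0 < C := by
    rw [hCdef]
    have h : (0:ℝ) < 2 * Real.pi / κ := by positivity
    positivity
  set X := x ^ (κ * (1 - Real.log κ)) with hXdef
  have hX : X = Real.exp (t * (1 - Real.log κ)) := by
    rw [hXdef, Real.rpow_def_of_pos hx0]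
    congr 1
    rw [htdef]; ring
  have hX0 : (0:ℝ) < X := by rw [hX]; exact Real.exp_pos _
  rw [div_lt_div_iff₀ (by positivity) (by positivity)]
  -- goal: m! * (X * √L) < C * L^(m+1)
  have hstirling := aux_factorial_le m hm1
  have hsqm : Real.sqrt m ≤ Real.sqrt κ * Real.sqrt L := by
    rw [← Real.sqrt_mul hκ0.le]
    exact Real.sqrt_le_sqrt (by rw [← htdef]; exact hmle)
  have hpowm : (m:ℝ)^m ≤ (κ * L)^m :=
    pow_le_pow_left₀ (by positivity) (by rw [← htdef]; exact hmle) m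
  have key1 : ((m:ℝ)/Real.exp 1)^m * X = (m:ℝ)^m * Real.exp (s - t * Real.log κ) := by
    rw [hX, div_pow, ← Real.exp_nat_mul, mul_one, div_mul_eq_mul_div, mul_div_assoc,
      ← Real.exp_sub]
    congr 2
    rw [hsdef]; ring
  have key2 : κ^m * Real.exp (s - t * Real.log κ) = Real.exp (s * (1 - Real.log κ)) := by
    have hκm : κ^m = Real.exp (m * Real.log κ) := by
      rw [Real.exp_nat_mul, Real.exp_log hκ0]
    rw [hκm, ← Real.exp_add]
    congr 1
    rw [hsdef]; ring
  have hnum : Real.exp 1 * Real.exp 1 < Real.sqrt (2*Real.pi) * Real.exp (13/12) := by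
    have h := aux_exp_lt_sqrt_two_pi
    have he2 : Real.exp 1 * Real.exp 1 = Real.exp (11/12) * Real.exp (13/12) := by
      rw [← Real.exp_add, ← Real.exp_add]; norm_num
    rw [he2]
    exact mul_lt_mul_of_pos_right h (Real.exp_pos _)
  have hCeq : C = Real.sqrt (2*Real.pi) * Real.exp (13/12) / Real.sqrt κ := by
    rw [hCdef, Real.sqrt_div (by positivity : (0:ℝ) ≤ 2*Real.pi)]
    ring
  have hA : Real.exp 1 * Real.sqrt κ * Real.exp (s * (1 - Real.log κ)) < C := by
    have h1 : Real.exp (s * (1 - Real.log κ)) ≤ Real.exp (1 - Real.log κ) := by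
      apply Real.exp_le_exp.mpr
      nlinarith
    have h2 : Real.exp (1 - Real.log κ) = Real.exp 1 / κ := by
      rw [Real.exp_sub, Real.exp_log hκ0]
    have h3 : Real.exp 1 * Real.sqrt κ * (Real.exp 1 / κ) = Real.exp 1 * Real.exp 1 / Real.sqrt κ := by
      rw [show Real.exp 1 * Real.sqrt κ * (Real.exp 1/κ)
          = Real.exp 1 * Real.exp 1 * (Real.sqrt κ/κ) by ring, Real.sqrt_div_self']
      ring
    calc Real.exp 1 * Real.sqrt κ * Real.exp (s * (1 - Real.log κ))
        ≤ Real.exp 1 * Real.sqrt κ * Real.exp (1 - Real.log κ) := by gcongr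
      _ = Real.exp 1 * Real.exp 1 / Real.sqrt κ := by rw [h2, h3]
      _ < C := by
          rw [hCeq]
          gcongr
  have hLL : Real.sqrt L * Real.sqrt L = L := Real.mul_self_sqrt hL0.le
  calc (m.factorial : ℝ) * (X * Real.sqrt L)
      ≤ (Real.exp 1 * Real.sqrt m * ((m:ℝ)/Real.exp 1)^m) * (X * Real.sqrt L) := by
        gcongr
    _ = Real.exp 1 * Real.sqrt m * ((m:ℝ)^m * Real.exp (s - t*Real.log κ)) * Real.sqrt L := by
        rw [← key1]; ring
    _ ≤ Real.exp 1 * (Real.sqrt κ * Real.sqrt L) * ((κ*L)^m * Real.exp (s - t*Real.log κ)) * Real.sqrt L := by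
        gcongr
    _ = (Real.exp 1 * Real.sqrt κ * Real.exp (s * (1 - Real.log κ))) * L^(m+1) := by
        rw [mul_pow, ← key2, pow_succ]
        linear_combination (Real.exp 1 * Real.sqrt κ * κ^m * L^m * Real.exp (s - t*Real.log κ)) * hLL
    _ < C * L^(m+1) := mul_lt_mul_of_pos_right hA (by positivity)
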